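/- Let λ, γ, γ', γ'' ∈ A and let 0 → F' →i F →p F'' → 0 be a λ-exact sequence of A-modules (p ∘ i = 0, and ker(i), ker(p)/im(i), coker(p) are annihilated by λ). Then: (i) if F is of γ-finite type, then F'' is of (λγ)-finite type; (ii) if F' is of γ'-finite type and F'' is of γ''-finite type, then F is of (λ²γ'γ'')-finite type, and if F' is of γ'-finite presentation and F'' is of γ''-finite presentation, then F is of (λ⁵γ'³γ'')-finite presentation. -/

import Mathlib

/-- An `A`-module `F` is of `γ`-finite type if there is an `A`-linear map `A^k → F`
whose cokernel is annihilated by `γ`. -/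
def GammaFiniteType {A : Type*} [CommRing A] (γ : A) (F : Type*) [AddCommGroup F]
    [Module A F] : Prop :=
  ∃ (k : ℕ) (u : (Fin k → A) →ₗ[A] F), ∀ y : F, ∃ x, γ • y = u x

/-- An `A`-module `F` is of `γ`-finite presentation if there is a `γ`-exact sequence
`A^l → A^k → F → 0`. -/
def GammaFinitePresentation {A : Type*} [CommRing A] (γ : A) (F : Type*) [AddCommGroup F]
    [Module A F] : Prop :=
  ∃ (k l : ℕ) (u : (Fin k → A) →ₗ[A] F) (w : (Fin l → A) →ₗ[A] (Fin k → A)),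
    (∀ x, u (w x) = 0) ∧ (∀ x, u x = 0 → ∃ z, γ • x = w z) ∧ (∀ y : F, ∃ x, γ • y = u x)

/-- Splitting `A^m × A^n ≃ A^{m+n}`. -/
def finProdLEquiv (A : Type*) [CommRing A] (m n : ℕ) :
    ((Fin m → A) × (Fin n → A)) ≃ₗ[A] (Fin (m + n) → A) where
  toFun q := Fin.append q.1 q.2
  invFun x := (x ∘ Fin.castAdd n, x ∘ Fin.natAdd m)
  map_add' q r := by
    funext j
    refine Fin.addCases (fun j => ?_) (fun j => ?_) j <;>
      simp [Fin.append_left, Fin.append_right]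
  map_smul' c q := by
    funext j
    refine Fin.addCases (fun j => ?_) (fun j => ?_) j <;>
      simp [Fin.append_left, Fin.append_right]
  left_inv q := by
    ext j <;> simp [Fin.append_left, Fin.append_right]
  right_inv x := by
    funext j
    refine Fin.addCases (fun j => ?_) (fun j => ?_) j <;>
      simp [Fin.append_left, Fin.append_right]

lemma lift_lemma {A M N : Type*} [CommRing A] [AddCommGroup M] [Module A M]
    [AddCommGroup N] [Module A N] (c : A) {k : ℕ} (q : M →ₗ[A] N)
    (g : (Fin k → A) →ₗ[A] N)
    (h : ∀ j : Fin k, ∃ m, c • g (Pi.single j 1) = q m) :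
    ∃ v : (Fin k → A) →ₗ[A] M, ∀ b, q (v b) = c • g b := by
  choose m hm using h
  refine ⟨Fintype.linearCombination A m, fun b => ?_⟩
  have hb : b = ∑ j, b j • (Pi.single j 1 : Fin k → A) := by
    funext idx
    simp [Pi.single_apply]
  calc q (Fintype.linearCombination A m b) = ∑ j, b j • q (m j) := by
        rw [Fintype.linearCombination_apply, map_sum]; simp_rw [map_smul]
    _ = ∑ j, b j • c • g (Pi.single j 1) := by simp_rw [← hm]
    _ = c • g (∑ j, b j • (Pi.single j 1 : Fin k → A)) := by
        rw [map_sum, Finset.smul_sum]; simp_rw [map_smul, smul_comm c]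
    _ = c • g b := by rw [← hb]

theorem statement5 {A : Type*} [CommRing A] (lam γ γ' γ'' : A)
    {F' F F'' : Type*} [AddCommGroup F'] [Module A F'] [AddCommGroup F] [Module A F]
    [AddCommGroup F''] [Module A F'']
    (i : F' →ₗ[A] F) (p : F →ₗ[A] F'')
    (hpi : ∀ x, p (i x) = 0)
    (hker : ∀ x, i x = 0 → lam • x = 0)
    (hmid : ∀ y, p y = 0 → ∃ x, lam • y = i x)
    (hcoker : ∀ z : F'', ∃ y, lam • z = p y) :
    (GammaFiniteType γ F → GammaFiniteType (lam * γ) F'') ∧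
    (GammaFiniteType γ' F' → GammaFiniteType γ'' F'' →
      GammaFiniteType (lam ^ 2 * γ' * γ'') F) ∧
    (GammaFinitePresentation γ' F' → GammaFinitePresentation γ'' F'' →
      GammaFinitePresentation (lam ^ 5 * γ' ^ 3 * γ'') F) := by
  refine ⟨?_, ?_, ?_⟩
  · rintro ⟨k, u, hu⟩
    refine ⟨k, p.comp u, fun z => ?_⟩
    obtain ⟨y, hy⟩ := hcoker z
    obtain ⟨x, hx⟩ := hu y
    refine ⟨x, ?_⟩
    have : (lam * γ) • z = γ • (lam • z) := by rw [smul_smul, mul_comm]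
    rw [this, hy, ← map_smul, hx, LinearMap.comp_apply]
  · rintro ⟨k', u', hu'⟩ ⟨k'', u'', hu''⟩
    obtain ⟨v, hv⟩ := lift_lemma lam p u'' (fun j => hcoker (u'' (Pi.single j 1)))
    set E := finProdLEquiv A k' k''
    set u : (Fin (k' + k'') → A) →ₗ[A] F :=
      ((i.comp u').coprod v).comp (E.symm : _ →ₗ[A] _) with hu_def
    have hu_app : ∀ a b, u (E (a, b)) = i (u' a) + v b := by
      intro a b
      simp [hu_def, LinearEquiv.symm_apply_apply]
    refine ⟨k' + k'', u, fun y => ?_⟩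
    obtain ⟨b, hb⟩ := hu'' (p y)
    have hp0 : p ((lam * γ'') • y - v b) = 0 := by
      rw [map_sub, map_smul, hv, mul_smul, hb, sub_self]
    obtain ⟨x', hx'⟩ := hmid _ hp0
    obtain ⟨a, ha⟩ := hu' x'
    refine ⟨E (a, (lam * γ') • b), ?_⟩
    have key : γ' • (lam • ((lam * γ'') • y - v b)) = i (u' a) := by
      rw [hx', ← map_smul, ha]
    rw [hu_app, ← key, LinearMap.map_smul v]
    module
  · rintro ⟨k', l', u', w', hw'1, hw'2, hu'3⟩ ⟨k'', l'', u'', w'', hw''1, hw''2, hu''3⟩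
    obtain ⟨v, hv⟩ := lift_lemma lam p u'' (fun j => hcoker (u'' (Pi.single j 1)))
    have ht0 : ∀ j : Fin l'', ∃ m, lam • (v.comp w'') (Pi.single j 1) = i m := by
      intro j
      apply hmid
      rw [LinearMap.comp_apply, hv, hw''1, smul_zero]
    obtain ⟨t, ht⟩ := lift_lemma lam i (v.comp w'') ht0
    obtain ⟨s, hs⟩ := lift_lemma γ' u' t (fun j => hu'3 (t (Pi.single j 1)))
    set Ek := finProdLEquiv A k' k''
    set El := finProdLEquiv A l' l''
    set u : (Fin (k' + k'') → A) →ₗ[A] F :=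
      ((i.comp u').coprod v).comp (Ek.symm : _ →ₗ[A] _) with hu_def
    set W : ((Fin l' → A) × (Fin l'' → A)) →ₗ[A] ((Fin k' → A) × (Fin k'' → A)) :=
      LinearMap.prod
        (w'.comp (LinearMap.fst A _ _) - s.comp (LinearMap.snd A _ _))
        ((lam * γ') • (w''.comp (LinearMap.snd A _ _))) with hW_def
    set w : (Fin (l' + l'') → A) →ₗ[A] (Fin (k' + k'') → A) :=
      (Ek : _ →ₗ[A] _).comp (W.comp (El.symm : _ →ₗ[A] _)) with hw_def
    have hu_app : ∀ a b, u (Ek (a, b)) = i (u' a) + v b := by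
      intro a b
      simp [hu_def, LinearEquiv.symm_apply_apply]
    have hw_app : ∀ z1 z2, w (El (z1, z2)) =
        Ek (w' z1 - s z2, (lam * γ') • w'' z2) := by
      intro z1 z2
      simp [hw_def, hW_def, LinearEquiv.symm_apply_apply]
    refine ⟨k' + k'', l' + l'', u, w, ?_, ?_, ?_⟩
    · -- u ∘ w = 0
      intro z
      obtain ⟨⟨z1, z2⟩, rfl⟩ := El.surjective z
      rw [hw_app, hu_app, map_sub, map_sub, hw'1, map_zero, hs, LinearMap.map_smul i,
        ht, LinearMap.comp_apply, LinearMap.map_smul v]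
      module
    · -- middle exactness
      intro x hx
      obtain ⟨⟨a, b⟩, rfl⟩ := Ek.surjective x
      rw [hu_app] at hx
      have hb0 : u'' (lam • b) = 0 := by
        have h0 : p (i (u' a) + v b) = 0 := by rw [hx, map_zero]
        rw [map_add, hpi, zero_add, hv] at h0
        rw [map_smul, h0]
      obtain ⟨z2, hz2⟩ := hw''2 _ hb0
      have hvb : v b = - i (u' a) := by
        rwa [add_comm, ← eq_neg_iff_add_eq_zero] at hx
      have hit : i (t z2 + (lam ^ 2 * γ'') • u' a) = 0 := by
        rw [map_add, ht, LinearMap.comp_apply, ← hz2, LinearMap.map_smul v,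
          LinearMap.map_smul v, hvb, LinearMap.map_smul i]
        module
      have hlam := hker _ hit
      have hu'0 : u' (lam • s z2 + (lam ^ 3 * γ' * γ'') • a) = 0 := by
        rw [map_add, LinearMap.map_smul u', hs, LinearMap.map_smul u']
        have step : lam • γ' • t z2 + (lam ^ 3 * γ' * γ'') • u' a
            = γ' • (lam • (t z2 + (lam ^ 2 * γ'') • u' a)) := by module
        rw [step, hlam, smul_zero]
      obtain ⟨z1, hz1⟩ := hw'2 _ hu'0
      refine ⟨(lam ^ 2 * γ') • El (z1, (lam * γ') • z2), ?_⟩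
      rw [map_smul, hw_app]
      have h1 : w' z1 - s ((lam * γ') • z2) = (lam ^ 3 * γ' ^ 2 * γ'') • a := by
        rw [← hz1, LinearMap.map_smul s]
        module
      have h2 : (lam * γ') • w'' ((lam * γ') • z2) = (lam ^ 3 * γ' ^ 2 * γ'') • b := by
        rw [LinearMap.map_smul w'', ← hz2]
        module
      rw [h1, h2]
      have h3 : Ek ((lam ^ 3 * γ' ^ 2 * γ'') • a, (lam ^ 3 * γ' ^ 2 * γ'') • b)
          = (lam ^ 3 * γ' ^ 2 * γ'') • Ek (a, b) := by
        rw [← map_smul]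
        rfl
      rw [h3]
      module
    · -- surjectivity
      intro y
      obtain ⟨b, hb⟩ := hu''3 (p y)
      have hp0 : p ((lam * γ'') • y - v b) = 0 := by
        rw [map_sub, map_smul, hv, mul_smul, hb, sub_self]
      obtain ⟨x', hx'⟩ := hmid _ hp0
      obtain ⟨a, ha⟩ := hu'3 x'
      refine ⟨(lam ^ 3 * γ' ^ 2) • Ek (a, (lam * γ') • b), ?_⟩
      have key : γ' • (lam • ((lam * γ'') • y - v b)) = i (u' a) := by
        rw [hx', ← map_smul, ha]
      rw [map_smul, hu_app, ← key, LinearMap.map_smul v]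
      module
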